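/- Let n = 2^L and consider a complete binary tree of depth L whose leaves are labeled 0,...,n-1. For an integer α with 0 ≤ α < n, let PE(α) be the set of internal/leaf nodes on the root-to-leaf path to leaf α. For an integer β with 0 ≤ β < n, let RE(β) be the canonical cover of the interval (β, n-1]: the minimal set of nodes, at most one per depth, whose descendant leaves are exactly {β+1, ..., n-1}. Then α > β if and only if PE(α) and RE(β) share a common node. -/

import Mathlib

/-- Complete binary tree of depth `L` with leaves `0,…,2^L-1`. A node at depth `d`
is identified with the length-`d` binary prefix of leaf labels, i.e. with the
number `p` such that the node covers leaves `p·2^(L-d), …, (p+1)·2^(L-d)-1`.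
`PE(α)` contains, at each depth `d ∈ [1,L]`, the node `α / 2^(L-d)`.
`RE(β)`, the canonical cover of `(β, 2^L-1]`, contains at depth `d` the node
`β / 2^(L-d) + 1` exactly when bit `L-d` of `β` is `0` (the right siblings along
the path to `β` where the path goes left).
Claim: `α > β` iff the path `PE(α)` and the cover `RE(β)` share a node. -/
theorem pe_re_comparison (L α β : ℕ) (hα : α < 2 ^ L) (hβ : β < 2 ^ L) :
    α > β ↔ ∃ d ∈ Finset.Icc 1 L,
      Nat.testBit β (L - d) = false ∧ α / 2 ^ (L - d) = β / 2 ^ (L - d) + 1 := by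
  constructor
  · intro hgt
    -- highest differing bit
    set S : Finset ℕ := (Finset.range L).filter
      (fun i => Nat.testBit α i ≠ Nat.testBit β i) with hS
    have hne : α ≠ β := Nat.ne_of_gt hgt
    have hSne : S.Nonempty := by
      by_contra h
      apply hne
      apply Nat.eq_of_testBit_eq
      intro i
      by_cases hiL : i < L
      · by_contra hbit
        exact h ⟨i, Finset.mem_filter.mpr ⟨Finset.mem_range.mpr hiL, hbit⟩⟩
      · rw [Nat.testBit_eq_false_of_lt (lt_of_lt_of_le hα (Nat.pow_le_pow_right (by norm_num) (le_of_not_gt hiL))),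
          Nat.testBit_eq_false_of_lt (lt_of_lt_of_le hβ (Nat.pow_le_pow_right (by norm_num) (le_of_not_gt hiL)))]
    set k := S.max' hSne with hk
    have hkmem : k ∈ S := S.max'_mem hSne
    have hkL : k < L := Finset.mem_range.mp (Finset.mem_filter.mp hkmem).1
    have hkdiff : Nat.testBit α k ≠ Nat.testBit β k := (Finset.mem_filter.mp hkmem).2
    have hhigh : ∀ j, k < j → Nat.testBit α j = Nat.testBit β j := by
      intro j hj
      by_cases hjL : j < L
      · by_contra hbit
        exact absurd (S.le_max' j (Finset.mem_filter.mpr ⟨Finset.mem_range.mpr hjL, hbit⟩))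
          (not_le.mpr hj)
      · rw [Nat.testBit_eq_false_of_lt (lt_of_lt_of_le hα (Nat.pow_le_pow_right (by norm_num) (le_of_not_gt hjL))),
          Nat.testBit_eq_false_of_lt (lt_of_lt_of_le hβ (Nat.pow_le_pow_right (by norm_num) (le_of_not_gt hjL)))]
    have hαk : Nat.testBit α k = true := by
      by_contra h
      have hα' : Nat.testBit α k = false := by simpa using h
      have hβ' : Nat.testBit β k = true := by
        cases hb : Nat.testBit β k with
        | false => exact absurd (hα'.trans hb.symm) hkdiff
        | true => rfl
      exact absurd (Nat.lt_of_testBit k hα' hβ' (fun j hj => hhigh j hj)) (not_lt.mpr hgt.le)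
    have hβk : Nat.testBit β k = false := by
      cases hb : Nat.testBit β k with
      | false => rfl
      | true => exact absurd (hαk.trans hb.symm) hkdiff
    refine ⟨L - k, Finset.mem_Icc.mpr ⟨by omega, by omega⟩, ?_, ?_⟩
    · rw [show L - (L - k) = k by omega]; exact hβk
    · rw [show L - (L - k) = k by omega]
      have heq : α / 2 ^ (k + 1) = β / 2 ^ (k + 1) := by
        have : α >>> (k+1) = β >>> (k+1) := by
          apply Nat.eq_of_testBit_eq
          intro i
          rw [Nat.testBit_shiftRight, Nat.testBit_shiftRight]
          exact hhigh (k + 1 + i) (by omega)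
        simpa [Nat.shiftRight_eq_div_pow] using this
      have hm1 : α / 2 ^ k % 2 = 1 := by
        have := hαk
        rw [Nat.testBit_eq_decide_div_mod_eq] at this
        simpa using this
      have hm0 : β / 2 ^ k % 2 = 0 := by
        have := hβk
        rw [Nat.testBit_eq_decide_div_mod_eq] at this
        simpa using this
      have hd1 : α / 2 ^ k / 2 = α / 2 ^ (k + 1) := by
        rw [Nat.div_div_eq_div_mul, pow_succ]
      have hd2 : β / 2 ^ k / 2 = β / 2 ^ (k + 1) := by
        rw [Nat.div_div_eq_div_mul, pow_succ]
      have e1 := Nat.div_add_mod (α / 2 ^ k) 2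
      have e2 := Nat.div_add_mod (β / 2 ^ k) 2
      omega
  · rintro ⟨d, hd, -, hdiv⟩
    have h1 : 2 ^ (L - d) * (α / 2 ^ (L - d)) ≤ α := Nat.mul_div_le α (2 ^ (L - d))
    have h2 : β < 2 ^ (L - d) * (β / 2 ^ (L - d)) + 2 ^ (L - d) := by
      have hpos : 0 < 2 ^ (L - d) := Nat.pow_pos (by norm_num)
      have h3 := Nat.div_add_mod β (2 ^ (L - d))
      have h4 := Nat.mod_lt β hpos
      omega
    calc β < 2 ^ (L - d) * (β / 2 ^ (L - d)) + 2 ^ (L - d) := h2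
      _ = 2 ^ (L - d) * (β / 2 ^ (L - d) + 1) := by ring
      _ = 2 ^ (L - d) * (α / 2 ^ (L - d)) := by rw [hdiv]
      _ ≤ α := h1
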